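/- arXiv:0908.1163 — 3 statements merged into one kernel-verified Lean document; each statement's English description precedes it below -/
import Mathlib

section
/- The sum alphabet S_sum = {x(n₁) + x'(n₂) : 0 ≤ n₁ < N₁, 0 ≤ n₂ < N₂} equals the set {x(n₁) + x'(k n₁ + m) : 0 ≤ n₁ < N₁, 0 ≤ m ≤ N₂/2 - 1} ∪ {x(n₁) + x'(k n₁ - m - 1) : 0 ≤ n₁ < N₁, 0 ≤ m ≤ N₂/2 - 1}, i.e., S_sum is contained in the union of N₂/2 concentric circles of radii 2cos(π(2m+1)/(2N₂)). -/
open Real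

lemma exp_eq_of_dvd (N : ℕ) (hN : 0 < N) (a b : ℤ) (h : (N : ℤ) ∣ (a - b))
    (A B : ℂ) (hA : A = (a : ℂ)) (hB : B = (b : ℂ)) :
    Complex.exp ((π : ℂ) * (2 * A + 1) / N * Complex.I) =
      Complex.exp ((π : ℂ) * (2 * B + 1) / N * Complex.I) := by
  obtain ⟨t, ht⟩ := h
  have hN' : (N : ℂ) ≠ 0 := Nat.cast_ne_zero.mpr hN.ne'
  have ha : A = B + N * t := by
    rw [hA, hB]
    have : (a : ℂ) = (b : ℂ) + (N : ℂ) * (t : ℂ) := by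
      have : a = b + N * t := by linarith
      exact_mod_cast congrArg (Int.cast : ℤ → ℂ) this
    simpa using this
  rw [ha, show (π : ℂ) * (2 * (B + N * t) + 1) / N * Complex.I =
      (π : ℂ) * (2 * B + 1) / N * Complex.I + t * (2 * π * Complex.I) by
    field_simp; ring]
  rw [Complex.exp_add, Complex.exp_int_mul_two_pi_mul_I, mul_one]

lemma aux_abs (θ : ℝ) :
    ‖1 + Complex.exp (θ * Complex.I)‖ = 2 * |Real.cos (θ / 2)| := by
  have h : (1 : ℂ) + Complex.exp (θ * Complex.I) =
      Complex.exp ((θ / 2 : ℝ) * Complex.I) * (2 * Complex.cos ((θ / 2 : ℝ))) := by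
    rw [Complex.two_cos, mul_add, ← Complex.exp_add, ← Complex.exp_add]
    push_cast
    ring_nf
    rw [Complex.exp_zero]
    ring
  rw [h, norm_mul, Complex.norm_exp_ofReal_mul_I, one_mul, ← Complex.ofReal_cos]
  rw [show ((2:ℂ) * (Real.cos (θ/2) : ℂ)) = ((2 * Real.cos (θ/2) : ℝ) : ℂ) by push_cast; ring]
  rw [Complex.norm_real, Real.norm_eq_abs, abs_mul]
  norm_num

lemma aux_abs_sum (α θ : ℝ) :
    ‖Complex.exp ((α : ℂ) * Complex.I) + Complex.exp (((α + θ : ℝ) : ℂ) * Complex.I)‖ =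
      2 * |Real.cos (θ / 2)| := by
  have h : Complex.exp ((α : ℂ) * Complex.I) + Complex.exp (((α + θ : ℝ) : ℂ) * Complex.I) =
      Complex.exp ((α : ℂ) * Complex.I) * (1 + Complex.exp ((θ : ℝ) * Complex.I)) := by
    rw [mul_add, mul_one, ← Complex.exp_add]; push_cast; ring_nf
  rw [h, norm_mul, Complex.norm_exp_ofReal_mul_I, one_mul, aux_abs]

/-- The sum alphabet
`S_sum = {x n₁ + x' n₂ : 0 ≤ n₁ < N₁, 0 ≤ n₂ < N₂}` equals the union
`{x n₁ + x' (k n₁ + m)} ∪ {x n₁ + x' (k n₁ - m - 1)}` over `0 ≤ n₁ < N₁`,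
`0 ≤ m ≤ N₂/2 - 1`; and `S_sum` is contained in the union of the `N₂/2`
concentric circles of radii `2·cos(π(2m+1)/(2N₂))`. Here `x n = e^{2πi n/N₁}`,
`x' n = e^{iπ(2n+1)/N₂}` (indices mod `N₂`, automatic by periodicity). -/
theorem stmt_11 (N₁ N₂ : ℕ) (hN1even : Even N₁) (hN2even : Even N₂)
    (hN1pos : 0 < N₁) (hN2pos : 0 < N₂) (hdvd : N₁ ∣ N₂)
    (k : ℕ) (hk : k = N₂ / N₁) :
    ({z : ℂ | ∃ n₁ < N₁, ∃ n₂ < N₂,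
        z = Complex.exp (2 * π * n₁ / N₁ * Complex.I) +
            Complex.exp (π * (2 * (n₂ : ℂ) + 1) / N₂ * Complex.I)} =
      {z : ℂ | ∃ n₁ < N₁, ∃ m ≤ N₂ / 2 - 1,
        z = Complex.exp (2 * π * n₁ / N₁ * Complex.I) +
            Complex.exp (π * (2 * ((k : ℂ) * n₁ + m) + 1) / N₂ * Complex.I)} ∪
      {z : ℂ | ∃ n₁ < N₁, ∃ m ≤ N₂ / 2 - 1,
        z = Complex.exp (2 * π * n₁ / N₁ * Complex.I) +
            Complex.exp (π * (2 * ((k : ℂ) * n₁ - m - 1) + 1) / N₂ * Complex.I)}) ∧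
    (∀ z : ℂ,
      z ∈ {z : ℂ | ∃ n₁ < N₁, ∃ n₂ < N₂,
        z = Complex.exp (2 * π * n₁ / N₁ * Complex.I) +
            Complex.exp (π * (2 * (n₂ : ℂ) + 1) / N₂ * Complex.I)} →
      ∃ m ≤ N₂ / 2 - 1, ‖z‖ = 2 * cos (π * (2 * m + 1) / (2 * N₂))) := by
  have hkN : k * N₁ = N₂ := by rw [hk]; exact Nat.div_mul_cancel hdvd
  obtain ⟨r, hr⟩ := hN2even
  have key : ({z : ℂ | ∃ n₁ < N₁, ∃ n₂ < N₂,
        z = Complex.exp (2 * π * n₁ / N₁ * Complex.I) +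
            Complex.exp (π * (2 * (n₂ : ℂ) + 1) / N₂ * Complex.I)} =
      {z : ℂ | ∃ n₁ < N₁, ∃ m ≤ N₂ / 2 - 1,
        z = Complex.exp (2 * π * n₁ / N₁ * Complex.I) +
            Complex.exp (π * (2 * ((k : ℂ) * n₁ + m) + 1) / N₂ * Complex.I)} ∪
      {z : ℂ | ∃ n₁ < N₁, ∃ m ≤ N₂ / 2 - 1,
        z = Complex.exp (2 * π * n₁ / N₁ * Complex.I) +
            Complex.exp (π * (2 * ((k : ℂ) * n₁ - m - 1) + 1) / N₂ * Complex.I)}) := by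
    ext z
    constructor
    · rintro ⟨n₁, hn₁, n₂, hn₂, rfl⟩
      set j : ℤ := ((n₂ : ℤ) - k * n₁) % N₂ with hjdef
      have hN2z : (0 : ℤ) < N₂ := by exact_mod_cast hN2pos
      have hj0 : 0 ≤ j := Int.emod_nonneg _ hN2z.ne'
      have hjlt : j < N₂ := Int.emod_lt_of_pos _ hN2z
      have ht : (n₂ : ℤ) - k * n₁ - j = N₂ * (((n₂ : ℤ) - k * n₁) / N₂) := by
        rw [hjdef, Int.emod_def]; ring
      by_cases hcase : j < ((N₂ / 2 : ℕ) : ℤ)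
      · refine Or.inl ⟨n₁, hn₁, j.toNat, ?_, ?_⟩
        · omega
        · have hm' : (j.toNat : ℤ) = j := Int.toNat_of_nonneg hj0
          congr 1
          exact exp_eq_of_dvd N₂ hN2pos n₂ (k * n₁ + j.toNat)
            ⟨(((n₂ : ℤ) - k * n₁) / N₂), by linear_combination ht - hm'⟩
            _ _ (by push_cast; ring) (by push_cast; ring)
      · refine Or.inr ⟨n₁, hn₁, N₂ - 1 - j.toNat, ?_, ?_⟩
        · omega
        · have hm' : ((N₂ - 1 - j.toNat : ℕ) : ℤ) = N₂ - 1 - j := by omega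
          congr 1
          exact exp_eq_of_dvd N₂ hN2pos n₂ (k * n₁ - (N₂ - 1 - j.toNat : ℕ) - 1)
            ⟨(((n₂ : ℤ) - k * n₁) / N₂) + 1, by linear_combination ht + hm'⟩
            _ _ (by push_cast; ring) (by push_cast; ring)
    · rintro (⟨n₁, hn₁, m, hm, rfl⟩ | ⟨n₁, hn₁, m, hm, rfl⟩)
      · refine ⟨n₁, hn₁, (k * n₁ + m) % N₂, Nat.mod_lt _ hN2pos, ?_⟩
        have h := Nat.div_add_mod (k * n₁ + m) N₂
        have h' : (N₂ : ℤ) * ((k * n₁ + m) / N₂ : ℕ) + ((k * n₁ + m) % N₂ : ℕ)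
            = (k : ℤ) * n₁ + m := by exact_mod_cast h
        congr 1
        exact exp_eq_of_dvd N₂ hN2pos (k * n₁ + m) ((k * n₁ + m) % N₂ : ℕ)
          ⟨(((k * n₁ + m) / N₂ : ℕ) : ℤ), by linear_combination -h'⟩
          _ _ (by push_cast; ring) (by norm_cast)
      · set a : ℤ := (k : ℤ) * n₁ - m - 1 with hadef
        have hN2z : (0 : ℤ) < N₂ := by exact_mod_cast hN2pos
        have h0 : 0 ≤ a % N₂ := Int.emod_nonneg _ hN2z.ne'
        have hlt : a % N₂ < N₂ := Int.emod_lt_of_pos _ hN2z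
        refine ⟨n₁, hn₁, (a % N₂).toNat, by omega, ?_⟩
        have hmod : a % N₂ = a - N₂ * (a / N₂) := by rw [Int.emod_def]
        have htn : (((a % N₂).toNat : ℤ)) = a % N₂ := Int.toNat_of_nonneg h0
        congr 1
        exact exp_eq_of_dvd N₂ hN2pos a ((a % N₂).toNat : ℤ)
          ⟨a / N₂, by linear_combination -hmod - htn⟩
          _ _ (by push_cast [hadef]; ring) (by norm_cast)
  refine ⟨key, ?_⟩
  intro z hz
  rw [key] at hz
  have hN1R : (N₁ : ℝ) ≠ 0 := Nat.cast_ne_zero.mpr hN1pos.ne'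
  have hN2R : (N₂ : ℝ) ≠ 0 := Nat.cast_ne_zero.mpr hN2pos.ne'
  have hN2C : (N₂ : ℂ) ≠ 0 := Nat.cast_ne_zero.mpr hN2pos.ne'
  have hN1C : (N₁ : ℂ) ≠ 0 := Nat.cast_ne_zero.mpr hN1pos.ne'
  have hcosnn : ∀ m : ℕ, m ≤ N₂ / 2 - 1 → 0 ≤ Real.cos (π * (2 * m + 1) / N₂ / 2) := by
    intro m hm
    apply Real.cos_nonneg_of_mem_Icc
    constructor
    · have : 0 ≤ π * (2 * (m : ℝ) + 1) / N₂ / 2 := by positivity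
      have hπ : 0 ≤ π / 2 := by positivity
      linarith
    · have hmle : (2 * (m : ℝ) + 1) ≤ N₂ := by
        have : 2 * m + 1 ≤ N₂ := by omega
        exact_mod_cast this
      have hN2pos' : (0 : ℝ) < N₂ := by positivity
      have h1 : π * (2 * (m : ℝ) + 1) / N₂ ≤ π := by
        rw [div_le_iff₀ hN2pos']
        nlinarith [Real.pi_pos]
      linarith
  obtain (⟨n₁, hn₁, m, hm, rfl⟩ | ⟨n₁, hn₁, m, hm, rfl⟩) := hz
  · set α : ℝ := 2 * π * (k * n₁) / N₂ with hα
    set θ : ℝ := π * (2 * m + 1) / N₂ with hθ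
    have e1 : (2 : ℂ) * π * n₁ / N₁ * Complex.I = (α : ℂ) * Complex.I := by
      rw [hα]; push_cast
      congr 1
      rw [div_eq_div_iff hN1C hN2C]
      have : (N₂ : ℂ) = (k : ℂ) * N₁ := by exact_mod_cast (hkN.symm : (N₂ : ℕ) = k * N₁)
      rw [this]; ring
    have e2 : (π : ℂ) * (2 * ((k : ℂ) * n₁ + m) + 1) / N₂ * Complex.I
        = ((α + θ : ℝ) : ℂ) * Complex.I := by
      rw [hα, hθ]; push_cast
      congr 1
      field_simp
      ring
    rw [e1, e2, aux_abs_sum α θ]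
    refine ⟨m, hm, ?_⟩
    rw [hθ] at *
    rw [abs_of_nonneg (hcosnn m hm),
      show π * (2 * (m:ℝ) + 1) / N₂ / 2 = π * (2 * (m:ℝ) + 1) / (2 * (N₂:ℝ)) from by ring]
  · set α : ℝ := 2 * π * (k * n₁) / N₂ with hα
    set θ : ℝ := -(π * (2 * m + 1) / N₂) with hθ
    have e1 : (2 : ℂ) * π * n₁ / N₁ * Complex.I = (α : ℂ) * Complex.I := by
      rw [hα]; push_cast
      congr 1
      rw [div_eq_div_iff hN1C hN2C]
      have : (N₂ : ℂ) = (k : ℂ) * N₁ := by exact_mod_cast (hkN.symm : (N₂ : ℕ) = k * N₁)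
      rw [this]; ring
    have e2 : (π : ℂ) * (2 * ((k : ℂ) * n₁ - m - 1) + 1) / N₂ * Complex.I
        = ((α + θ : ℝ) : ℂ) * Complex.I := by
      rw [hα, hθ]; push_cast
      congr 1
      field_simp
      ring
    rw [e1, e2, aux_abs_sum α θ]
    refine ⟨m, hm, ?_⟩
    rw [hθ] at *
    rw [show -(π * (2 * (m:ℝ) + 1) / N₂) / 2 = -(π * (2 * (m:ℝ) + 1) / N₂ / 2) from by ring,
      Real.cos_neg, abs_of_nonneg (hcosnn m hm),
      show π * (2 * (m:ℝ) + 1) / N₂ / 2 = π * (2 * (m:ℝ) + 1) / (2 * (N₂:ℝ)) from by ring]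
end

section
/- For distinct points p, q of the Ungerboeck subset S^{eo}_sum lying on the same circle C^m, the angular separation is a nonzero multiple of 4π/N₁, and hence |p - q| ≥ 2·r(m)·sin(2π/N₁) ≥ 4·sin(π/(2N₂))·sin(2π/N₁). -/
open Real

/-- The Ungerboeck subset `S^{eo}_sum = S^e_1 + S^o_2` where
`S^e_1 = {e^{2πi n₁/N₁} : n₁ even}` and
`S^o_2 = {e^{2πi n₂/N₂}·e^{iπ/N₂} = e^{iπ(2n₂+1)/N₂} : n₂ odd}`. -/
noncomputable def SeoSum (N₁ N₂ : ℕ) : Set ℂ :=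
  {z | ∃ n₁ n₂ : ℕ, n₁ < N₁ ∧ Even n₁ ∧ n₂ < N₂ ∧ Odd n₂ ∧
    z = Complex.exp (2 * Real.pi * n₁ / N₁ * Complex.I) +
        Complex.exp (Real.pi * (2 * n₂ + 1) / N₂ * Complex.I)}

lemma aux_exp_add (t ψ : ℝ) :
    Complex.exp ((ψ + t : ℝ) * Complex.I) + Complex.exp ((ψ - t : ℝ) * Complex.I) =
      2 * (Real.cos t : ℂ) * Complex.exp ((ψ : ℝ) * Complex.I) := by
  have h1 : ((ψ + t : ℝ) : ℂ) * Complex.I = (t : ℝ) * Complex.I + (ψ : ℝ) * Complex.I := by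
    push_cast; ring
  have h2 : ((ψ - t : ℝ) : ℂ) * Complex.I = (-(t:ℝ)) * Complex.I + (ψ : ℝ) * Complex.I := by
    push_cast; ring
  rw [h1, h2, Complex.exp_add, Complex.exp_add, Complex.ofReal_cos]
  simp only [Complex.exp_mul_I, Complex.cos_neg, Complex.sin_neg]
  ring

lemma aux_abs_sub (t ψ : ℝ) :
    ‖Complex.exp ((ψ + t : ℝ) * Complex.I) - Complex.exp ((ψ - t : ℝ) * Complex.I)‖ =
      2 * |Real.sin t| := by
  have h1 : ((ψ + t : ℝ) : ℂ) * Complex.I = (t : ℝ) * Complex.I + (ψ : ℝ) * Complex.I := by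
    push_cast; ring
  have h2 : ((ψ - t : ℝ) : ℂ) * Complex.I = (-(t:ℝ)) * Complex.I + (ψ : ℝ) * Complex.I := by
    push_cast; ring
  have key : Complex.exp ((ψ + t : ℝ) * Complex.I) - Complex.exp ((ψ - t : ℝ) * Complex.I) =
      (2 * (Real.sin t : ℂ) * Complex.I) * Complex.exp ((ψ : ℝ) * Complex.I) := by
    rw [h1, h2, Complex.exp_add, Complex.exp_add, Complex.ofReal_sin]
    simp only [Complex.exp_mul_I, Complex.cos_neg, Complex.sin_neg]
    ring
  rw [key]
  simp [Complex.norm_exp_ofReal_mul_I, Complex.norm_real, Real.norm_eq_abs, abs_mul, ← Complex.ofReal_sin]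

lemma key_form (N₁ N₂ m : ℕ) (hN₁4 : 4 ≤ N₁) (hN₂e : 2 ∣ N₂) (hdvd : N₁ ∣ N₂)
    (hmlt : 2 * m + 1 < N₂) (z : ℂ) (hz : z ∈ SeoSum N₁ N₂)
    (hzm : ‖z‖ = 2 * Real.cos (π * (2 * m + 1) / (2 * N₂))) :
    ∃ a : ℕ, Even a ∧
      ((Even m ∧ z = ((2 * Real.cos (π * (2 * m + 1) / (2 * N₂)) : ℝ) : ℂ) *
          Complex.exp ((2 * π * a / N₁ - π * (2 * m + 1) / (2 * N₂) : ℝ) * Complex.I)) ∨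
       (Odd m ∧ z = ((2 * Real.cos (π * (2 * m + 1) / (2 * N₂)) : ℝ) : ℂ) *
          Complex.exp ((2 * π * a / N₁ + π * (2 * m + 1) / (2 * N₂) : ℝ) * Complex.I))) := by
  obtain ⟨n₁, n₂, hn₁lt, hn₁e, hn₂lt, hn₂o, rfl⟩ := hz
  have hN₁pos : 0 < N₁ := by omega
  have hN₂pos : 0 < N₂ := by omega
  have hN₁R : (0:ℝ) < N₁ := by exact_mod_cast hN₁pos
  have hN₂R : (0:ℝ) < N₂ := by exact_mod_cast hN₂pos
  have hπ := Real.pi_pos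
  set θ : ℝ := π * (2 * m + 1) / (2 * N₂) with hθ
  set α : ℝ := 2 * π * n₁ / N₁ with hα
  set β : ℝ := π * (2 * n₂ + 1) / N₂ with hβ
  have hθpos : 0 < θ := by rw [hθ]; positivity
  have hθlt : θ < π / 2 := by
    rw [hθ, div_lt_div_iff₀ (by positivity) (by norm_num)]
    have hc : (2 * (m:ℝ) + 1) < N₂ := by exact_mod_cast hmlt
    nlinarith
  have hcosθpos : 0 < Real.cos θ := Real.cos_pos_of_mem_Ioo ⟨by linarith, hθlt⟩
  have e1 : (2 * (Real.pi:ℂ) * (n₁:ℂ) / (N₁:ℂ) * Complex.I) = ((α : ℝ) : ℂ) * Complex.I := by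
    rw [hα]; push_cast; ring
  have e2 : ((Real.pi:ℂ) * (2 * (n₂:ℂ) + 1) / (N₂:ℂ) * Complex.I) = ((β : ℝ) : ℂ) * Complex.I := by
    rw [hβ]; push_cast; ring
  rw [e1, e2] at hzm ⊢
  have hform : Complex.exp ((α:ℝ) * Complex.I) + Complex.exp ((β:ℝ) * Complex.I) =
      2 * (Real.cos ((α - β)/2) : ℂ) * Complex.exp ((((α + β)/2 : ℝ)) * Complex.I) := by
    have h := aux_exp_add ((α - β)/2) ((α + β)/2)
    rw [show (α + β)/2 + (α - β)/2 = α by ring, show (α + β)/2 - (α - β)/2 = β by ring] at h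
    exact h
  have habs2 : |Real.cos ((α - β)/2)| = Real.cos θ := by
    have h := hzm
    rw [hform] at h
    simp only [norm_mul, Complex.norm_two, Complex.norm_real, Real.norm_eq_abs,
      Complex.norm_exp_ofReal_mul_I, mul_one] at h
    linarith
  obtain ⟨s, hs⟩ : ∃ s : ℤ, (α - β)/2 = s * π + θ ∨ (α - β)/2 = s * π - θ := by
    rcases (abs_eq hcosθpos.le).mp habs2 with hcc | hcc
    · rcases Real.cos_eq_cos_iff.mp hcc with ⟨kk, h | h⟩
      · exact ⟨-2*kk, Or.inl (by push_cast; linarith)⟩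
      · exact ⟨2*kk, Or.inr (by push_cast; linarith)⟩
    · have hcc' : Real.cos ((α - β)/2) = Real.cos (π - θ) := by
        rw [Real.cos_pi_sub]; linarith
      rcases Real.cos_eq_cos_iff.mp hcc' with ⟨kk, h | h⟩
      · exact ⟨1-2*kk, Or.inr (by push_cast; linarith)⟩
      · exact ⟨2*kk-1, Or.inl (by push_cast; linarith)⟩
  set k' : ℕ := N₂ / N₁ with hk'
  have hN2eq : N₂ = k' * N₁ := (Nat.div_mul_cancel hdvd).symm
  set c : ℕ := k' * n₁ with hcdef
  have hcEven : Even c := hn₁e.mul_left k'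
  have hN₁ne : (N₁:ℝ) ≠ 0 := hN₁R.ne'
  have hN₂ne : (N₂:ℝ) ≠ 0 := hN₂R.ne'
  have hN2R : (N₂:ℝ) = (k':ℝ) * (N₁:ℝ) := by exact_mod_cast hN2eq
  have hαc : α = 2 * π * c / N₂ := by
    rw [hα, hcdef, hN2R]
    have hk'ne : (k':ℝ) ≠ 0 := by
      have : 0 < k' := by
        rcases Nat.eq_zero_or_pos k' with h | h
        · exfalso; rw [h] at hN2eq; omega
        · exact h
      exact_mod_cast this.ne'
    push_cast
    field_simp
  obtain ⟨c₀, hc₀⟩ := hcEven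
  obtain ⟨d₀, hd₀⟩ := hn₂o
  obtain ⟨w, hw⟩ := hN₂e
  have hc₀' : (c:ℤ) = (c₀:ℤ) + (c₀:ℤ) := by exact_mod_cast hc₀
  have hd₀' : (n₂:ℤ) = 2*(d₀:ℤ) + 1 := by exact_mod_cast hd₀
  have hw' : (N₂:ℤ) = 2*(w:ℤ) := by exact_mod_cast hw
  rcases hs with hs | hs
  · -- φ = sπ + θ, m even, z = r exp((α-θ)I)
    rw [hαc, hβ, hθ] at hs
    have h3 : π * ((2 * (c:ℝ) - (2 * (n₂:ℝ) + 1)) / N₂) =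
        π * (2 * (s:ℝ) + (2 * (m:ℝ) + 1) / N₂) := by
      linear_combination 2 * hs
    have h4 := mul_left_cancel₀ hπ.ne' h3
    have hr2 : (2 * (c:ℝ) - (2 * (n₂:ℝ) + 1)) = 2 * (N₂:ℝ) * s + (2 * (m:ℝ) + 1) := by
      field_simp at h4
      linarith
    have hintZ : 2 * (c:ℤ) - (2 * (n₂:ℤ) + 1) = 2 * (N₂:ℤ) * s + (2 * (m:ℤ) + 1) := by
      exact_mod_cast hr2
    have hmE : Even m := by
      have hmz : (m:ℤ) = (c:ℤ) - (n₂:ℤ) - (N₂:ℤ)*s - 1 := by linarith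
      have : Even ((m:ℤ)) := by
        rw [hmz, hc₀', hd₀', hw']
        exact ⟨(c₀:ℤ) - (d₀:ℤ) - (w:ℤ)*s - 1, by ring⟩
      exact_mod_cast this
    refine ⟨n₁, hn₁e, Or.inl ⟨hmE, ?_⟩⟩
    have hβ2 : β = α - 2*θ - 2*π*s := by
      rw [hβ, hαc, hθ]
      linear_combination -2 * hs
    have hexpβ : Complex.exp ((β:ℝ) * Complex.I) =
        Complex.exp (((α - 2*θ : ℝ)) * Complex.I) := by
      rw [Complex.exp_eq_exp_iff_exists_int]
      exact ⟨-s, by rw [hβ2]; push_cast; ring⟩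
    rw [hexpβ]
    have h7 := aux_exp_add θ (α - θ)
    rw [show α - θ + θ = α by ring, show α - θ - θ = α - 2*θ by ring] at h7
    rw [h7, show 2 * π * (n₁:ℝ) / (N₁:ℝ) - θ = α - θ by rw [hα]]
    push_cast
    ring
  · -- φ = sπ - θ, m odd, z = r exp((α+θ)I)
    rw [hαc, hβ, hθ] at hs
    have h3 : π * ((2 * (c:ℝ) - (2 * (n₂:ℝ) + 1)) / N₂) =
        π * (2 * (s:ℝ) - (2 * (m:ℝ) + 1) / N₂) := by
      linear_combination 2 * hs
    have h4 := mul_left_cancel₀ hπ.ne' h3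
    have hr2 : (2 * (c:ℝ) - (2 * (n₂:ℝ) + 1)) = 2 * (N₂:ℝ) * s - (2 * (m:ℝ) + 1) := by
      field_simp at h4
      linarith
    have hintZ : 2 * (c:ℤ) - (2 * (n₂:ℤ) + 1) = 2 * (N₂:ℤ) * s - (2 * (m:ℤ) + 1) := by
      exact_mod_cast hr2
    have hmO : Odd m := by
      have hmz : (m:ℤ) = (N₂:ℤ)*s - (c:ℤ) + (n₂:ℤ) := by linarith
      have : Odd ((m:ℤ)) := by
        rw [hmz, hc₀', hd₀', hw']
        exact ⟨(w:ℤ)*s - (c₀:ℤ) + (d₀:ℤ), by ring⟩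
      exact_mod_cast this
    refine ⟨n₁, hn₁e, Or.inr ⟨hmO, ?_⟩⟩
    have hβ2 : β = α + 2*θ - 2*π*s := by
      rw [hβ, hαc, hθ]
      linear_combination -2 * hs
    have hexpβ : Complex.exp ((β:ℝ) * Complex.I) =
        Complex.exp (((α + 2*θ : ℝ)) * Complex.I) := by
      rw [Complex.exp_eq_exp_iff_exists_int]
      exact ⟨-s, by rw [hβ2]; push_cast; ring⟩
    rw [hexpβ]
    have h7 := aux_exp_add θ (α + θ)
    rw [show α + θ + θ = α + 2*θ by ring, show α + θ - θ = α by ring] at h7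
    rw [add_comm] at h7
    rw [h7, show 2 * π * (n₁:ℝ) / (N₁:ℝ) + θ = α + θ by rw [hα]]
    push_cast
    ring

lemma aux_sin_bound (N₁ : ℕ) (v : ℕ) (hv : N₁ = 2 * v) (hv2 : 2 ≤ v) (d : ℤ)
    (hnd : ¬ ((v:ℤ) ∣ d)) :
    Real.sin (2 * π / N₁) ≤ |Real.sin (2 * π * d / N₁)| := by
  have hπ := Real.pi_pos
  have hvR : (0:ℝ) < v := by positivity
  have hNR : (N₁:ℝ) = 2 * v := by exact_mod_cast hv
  have hN1R : (0:ℝ) < N₁ := by rw [hNR]; positivity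
  set e : ℤ := d % v with he
  set g : ℤ := d / v with hg
  have hvZ : (0:ℤ) < (v:ℤ) := by exact_mod_cast (by omega : 0 < v)
  have he0 : 0 ≤ e := Int.emod_nonneg d hvZ.ne'
  have he1 : e < v := Int.emod_lt_of_pos d hvZ
  have hene : e ≠ 0 := by
    intro h
    exact hnd (Int.dvd_of_emod_eq_zero (by rw [← he]; exact h))
  have hdg : d = v * g + e := by rw [he, hg]; exact (Int.mul_ediv_add_emod d v).symm
  have hdR : (d:ℝ) = (v:ℝ) * (g:ℝ) + (e:ℝ) := by exact_mod_cast hdg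
  have hsplit : 2 * π * (d:ℝ) / N₁ = 2 * π * (e:ℝ) / N₁ + (g:ℝ) * π := by
    rw [hdR, hNR]
    field_simp
    ring
  have habs : |Real.sin (2 * π * (d:ℝ) / N₁)| = |Real.sin (2 * π * (e:ℝ) / N₁)| := by
    rw [hsplit, Real.sin_add_int_mul_pi, abs_mul]
    have : |((-1:ℝ)) ^ g| = 1 := by
      rcases Int.even_or_odd g with hp | hp
      · rw [hp.neg_one_zpow]; norm_num
      · rw [hp.neg_one_zpow]; norm_num
    rw [this, one_mul]
  rw [habs]
  have he1' : (1:ℝ) ≤ (e:ℝ) := by exact_mod_cast (by omega : (1:ℤ) ≤ e)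
  have he2' : (e:ℝ) ≤ (v:ℝ) - 1 := by
    have : (e:ℤ) ≤ (v:ℤ) - 1 := by omega
    exact_mod_cast this
  set x : ℝ := 2 * π * (e:ℝ) / N₁ with hx
  have hpos : 0 < 2 * π / (N₁:ℝ) := by positivity
  have hx1 : 2 * π / N₁ ≤ x := by
    rw [hx]
    have h := mul_le_mul_of_nonneg_right (by nlinarith : 2*π ≤ 2*π*(e:ℝ))
      (le_of_lt (inv_pos.mpr hN1R))
    simpa [div_eq_mul_inv] using h
  have hx2 : x ≤ π - 2 * π / N₁ := by
    rw [hx, hNR, div_le_iff₀ (by positivity : (0:ℝ) < 2 * v)]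
    have expand : (π - 2*π/(2*(v:ℝ))) * (2*(v:ℝ)) = 2*π*v - 2*π := by
      field_simp
    rw [expand]
    nlinarith
  have hquarter : 2 * π / (N₁:ℝ) ≤ π / 2 := by
    rw [hNR, div_le_div_iff₀ (by positivity) (by norm_num)]
    nlinarith
  have hxnonneg : 0 ≤ x := by rw [hx]; positivity
  have hxpi : x ≤ π := by linarith
  rw [abs_of_nonneg (Real.sin_nonneg_of_nonneg_of_le_pi hxnonneg hxpi)]
  rcases le_or_gt x (π / 2) with hc | hc
  · exact Real.sin_le_sin_of_le_of_le_pi_div_two (by linarith) hc hx1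
  · nth_rewrite 2 [← Real.sin_pi_sub]
    exact Real.sin_le_sin_of_le_of_le_pi_div_two (by linarith) (by linarith) (by linarith)

lemma aux_arg (r : ℝ) (hr : 0 < r) (A : ℝ) (z : ℂ)
    (hz : z = (r : ℝ) * Complex.exp ((A : ℝ) * Complex.I)) :
    ∃ t : ℤ, Complex.arg z = A + 2 * π * t := by
  have habs : ‖z‖ = r := by
    rw [hz]
    simp [Complex.norm_exp_ofReal_mul_I, Complex.norm_real, Real.norm_eq_abs, abs_of_pos hr]
  have h1 : (r : ℂ) * Complex.exp ((Complex.arg z : ℝ) * Complex.I) =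
      (r : ℂ) * Complex.exp ((A : ℝ) * Complex.I) := by
    rw [← habs, Complex.norm_mul_exp_arg_mul_I z, habs, ← hz]
  have hrne : (r : ℂ) ≠ 0 := by exact_mod_cast hr.ne'
  have h2 := mul_left_cancel₀ hrne h1
  rw [Complex.exp_eq_exp_iff_exists_int] at h2
  obtain ⟨n, hn⟩ := h2
  refine ⟨n, ?_⟩
  have h3 := congrArg Complex.im hn
  simp [Complex.mul_im, Complex.add_im] at h3
  rw [h3]; push_cast; ring

set_option maxHeartbeats 1000000 in
/-- For distinct points `p, q` of `S^{eo}_sum` lying on the same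
circle `C^m` (of radius `r m = 2·cos(π(2m+1)/(2N₂))`), the angular separation
is a nonzero multiple of `4π/N₁` (mod `2π`, i.e. the multiplier is not
divisible by `N₁/2`), and hence
`|p - q| ≥ 2·r(m)·sin(2π/N₁) ≥ 4·sin(π/(2N₂))·sin(2π/N₁)`. -/
theorem stmt_14 (N₁ N₂ u₁ u₂ : ℕ) (h1 : N₁ = 2 ^ u₁) (h2 : N₂ = 2 ^ u₂)
    (h4 : 4 ≤ N₁) (hle : N₁ ≤ N₂) (k : ℕ) (hk : k = N₂ / N₁)
    (m : ℕ) (hm : m ≤ N₂ / 2 - 1) (p q : ℂ)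
    (hp : p ∈ SeoSum N₁ N₂) (hq : q ∈ SeoSum N₁ N₂)
    (hpm : ‖p‖ = 2 * cos (π * (2 * m + 1) / (2 * N₂)))
    (hqm : ‖q‖ = 2 * cos (π * (2 * m + 1) / (2 * N₂)))
    (hpq : p ≠ q) :
    (∃ j : ℤ, ¬ (((N₁ : ℤ) / 2) ∣ j) ∧
        Complex.arg p - Complex.arg q = 4 * π * j / N₁) ∧
      2 * (2 * cos (π * (2 * m + 1) / (2 * N₂))) * sin (2 * π / N₁) ≤
        ‖p - q‖ ∧
      4 * sin (π / (2 * N₂)) * sin (2 * π / N₁) ≤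
        2 * (2 * cos (π * (2 * m + 1) / (2 * N₂))) * sin (2 * π / N₁) := by
  have hπ := Real.pi_pos
  have hN₁pos : 0 < N₁ := by omega
  have hN₂4 : 4 ≤ N₂ := le_trans h4 hle
  have hN₂pos : 0 < N₂ := by omega
  have hu₁2 : 2 ≤ u₁ := by
    rcases Nat.lt_or_ge u₁ 2 with h | h
    · interval_cases u₁ <;> simp_all <;> omega
    · exact h
  have hu₂2 : 2 ≤ u₂ := by
    rcases Nat.lt_or_ge u₂ 2 with h | h
    · interval_cases u₂ <;> simp_all <;> omega
    · exact h
  have hdvd : N₁ ∣ N₂ := by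
    rw [h1, h2]
    exact pow_dvd_pow 2 ((Nat.pow_le_pow_iff_right (by norm_num : 1 < 2)).mp (h1 ▸ h2 ▸ hle))
  have hN₂e : 2 ∣ N₂ := by
    rw [h2]
    exact dvd_pow_self 2 (by omega)
  set v : ℕ := 2 ^ (u₁ - 1) with hvdef
  have hvN : N₁ = 2 * v := by
    rw [h1, hvdef, ← pow_succ']
    congr 1
    omega
  have hv2 : 2 ≤ v := by
    rw [hvdef]
    calc 2 = 2^1 := by norm_num
    _ ≤ 2 ^ (u₁ - 1) := Nat.pow_le_pow_right (by norm_num) (by omega)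
  have hmlt : 2 * m + 1 < N₂ := by
    obtain ⟨w, hw⟩ := hN₂e
    omega
  clear_value v
  clear hvdef h1 h2 hk
  have hN₁R : (0:ℝ) < N₁ := by exact_mod_cast hN₁pos
  have hN₂R : (0:ℝ) < N₂ := by exact_mod_cast hN₂pos
  have hvR : (0:ℝ) < v := by positivity
  have hNv : (N₁:ℝ) = 2 * (v:ℝ) := by exact_mod_cast hvN
  set θ : ℝ := π * (2 * m + 1) / (2 * N₂) with hθ
  have hθpos : 0 < θ := by rw [hθ]; positivity
  have hθlt : θ < π / 2 := by
    rw [hθ, div_lt_div_iff₀ (by positivity) (by norm_num)]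
    have hc : (2 * (m:ℝ) + 1) < N₂ := by exact_mod_cast hmlt
    nlinarith
  have hcosθpos : 0 < Real.cos θ := Real.cos_pos_of_mem_Ioo ⟨by linarith, hθlt⟩
  clear_value θ
  set r : ℝ := 2 * Real.cos θ with hrdef
  have hr : 0 < r := by rw [hrdef]; linarith
  clear_value r
  have hpm' : ‖p‖ = 2 * Real.cos (π * (2 * m + 1) / (2 * N₂)) := by
    rw [hpm, hrdef, hθ]
  have hqm' : ‖q‖ = 2 * Real.cos (π * (2 * m + 1) / (2 * N₂)) := by
    rw [hqm, hrdef, hθ]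
  obtain ⟨a, haE, hpcase⟩ := key_form N₁ N₂ m h4 hN₂e hdvd hmlt p hp hpm'
  obtain ⟨b, hbE, hqcase⟩ := key_form N₁ N₂ m h4 hN₂e hdvd hmlt q hq hqm'
  rw [← hθ, ← hrdef] at hpcase hqcase
  obtain ⟨ε, hP, hQ⟩ : ∃ ε : ℝ,
      p = ((r:ℝ):ℂ) * Complex.exp ((2 * π * a / N₁ + ε : ℝ) * Complex.I) ∧
      q = ((r:ℝ):ℂ) * Complex.exp ((2 * π * b / N₁ + ε : ℝ) * Complex.I) := by
    rcases hpcase with ⟨hme, hPf⟩ | ⟨hmo, hPf⟩ <;> rcases hqcase with ⟨hme', hQf⟩ | ⟨hmo', hQf⟩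
    · exact ⟨-θ, by rw [hPf, show 2*π*(a:ℝ)/N₁ - θ = 2*π*(a:ℝ)/N₁ + (-θ) from by ring],
        by rw [hQf, show 2*π*(b:ℝ)/N₁ - θ = 2*π*(b:ℝ)/N₁ + (-θ) from by ring]⟩
    · exact ((Nat.not_odd_iff_even.mpr hme) hmo').elim
    · exact ((Nat.not_odd_iff_even.mpr hme') hmo).elim
    · exact ⟨θ, hPf, hQf⟩
  obtain ⟨t₁, ht₁⟩ := aux_arg r hr (2 * π * a / N₁ + ε) p hP
  obtain ⟨t₂, ht₂⟩ := aux_arg r hr (2 * π * b / N₁ + ε) q hQ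
  obtain ⟨a', ha'⟩ := haE
  obtain ⟨b', hb'⟩ := hbE
  set d : ℤ := (a' : ℤ) - b' with hddef
  set j : ℤ := d + (t₁ - t₂) * v with hjdef
  clear_value d j
  have haR : (a:ℝ) = (a':ℝ) + (a':ℝ) := by exact_mod_cast ha'
  have hbR : (b:ℝ) = (b':ℝ) + (b':ℝ) := by exact_mod_cast hb'
  have hjR : (j:ℝ) = (a':ℝ) - (b':ℝ) + ((t₁:ℝ) - (t₂:ℝ)) * (v:ℝ) := by
    rw [hjdef, hddef]; push_cast; ring
  have hargd : Complex.arg p - Complex.arg q = 4 * π * j / N₁ := by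
    rw [ht₁, ht₂, hjR, hNv, haR, hbR]
    field_simp
    ring
  have hnoj : ¬ ((v:ℤ) ∣ j) := by
    rintro ⟨cc, hcc⟩
    have hA : Complex.arg p - Complex.arg q = 2 * π * (cc:ℝ) := by
      rw [hargd, hcc, hNv]
      push_cast
      field_simp
      ring
    have hb1 : Complex.arg p - Complex.arg q < 2 * π := by
      linarith [Complex.arg_le_pi p, Complex.neg_pi_lt_arg q]
    have hb2 : -(2 * π) < Complex.arg p - Complex.arg q := by
      linarith [Complex.neg_pi_lt_arg p, Complex.arg_le_pi q]
    have hcc0 : cc = 0 := by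
      have h1 : (cc:ℝ) < 1 := by nlinarith
      have h2 : (-1:ℝ) < (cc:ℝ) := by nlinarith
      have : (cc:ℤ) < 1 := by exact_mod_cast h1
      have : (-1:ℤ) < cc := by exact_mod_cast h2
      omega
    have hargeq : Complex.arg p = Complex.arg q := by
      rw [hcc0] at hA
      push_cast at hA
      linarith
    exact hpq (Complex.ext_norm_arg (hpm.trans hqm.symm) hargeq)
  have hN₁Z : (N₁:ℤ) = 2 * (v:ℤ) := by exact_mod_cast hvN
  have hfirst : ∃ j' : ℤ, ¬ (((N₁ : ℤ) / 2) ∣ j') ∧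
      Complex.arg p - Complex.arg q = 4 * π * j' / N₁ := by
    refine ⟨j, ?_, hargd⟩
    rw [hN₁Z, Int.mul_ediv_cancel_left _ two_ne_zero]
    exact hnoj
  have hnd : ¬ ((v:ℤ) ∣ d) := by
    rintro ⟨cc, hcc⟩
    exact hnoj ⟨cc + (t₁ - t₂), by rw [hjdef, hcc]; ring⟩
  -- distance bound
  have htt : (2 * π * a / (N₁:ℝ) + ε - (2 * π * b / N₁ + ε)) / 2 = 2 * π * (d:ℝ) / N₁ := by
    rw [haR, hbR, hNv, hddef]
    push_cast
    field_simp
    ring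
  have habspq : ‖p - q‖ = r * (2 * |Real.sin (2 * π * (d:ℝ) / N₁)|) := by
    set A : ℝ := 2 * π * a / N₁ + ε with hA
    set B : ℝ := 2 * π * b / N₁ + ε with hB
    have hsub : p - q = ((r:ℝ):ℂ) *
        (Complex.exp ((A:ℝ) * Complex.I) - Complex.exp ((B:ℝ) * Complex.I)) := by
      rw [hP, hQ]; ring
    rw [hsub, norm_mul, Complex.norm_real, Real.norm_eq_abs, abs_of_pos hr]
    congr 1
    have hab := aux_abs_sub ((A-B)/2) ((A+B)/2)
    rw [show (A+B)/2 + (A-B)/2 = A by ring, show (A+B)/2 - (A-B)/2 = B by ring] at hab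
    rw [show (A - B)/2 = 2 * π * (d:ℝ) / N₁ from htt] at hab
    exact hab
  have hsinb := aux_sin_bound N₁ v hvN hv2 d hnd
  have hsecond : 2 * r * Real.sin (2 * π / N₁) ≤ ‖p - q‖ := by
    rw [habspq]
    nlinarith [hsinb, hr]
  -- third bound
  have hsin2N1 : 0 ≤ Real.sin (2 * π / N₁) := by
    apply Real.sin_nonneg_of_nonneg_of_le_pi
    · positivity
    · rw [div_le_iff₀ hN₁R]
      have : (4:ℝ) ≤ N₁ := by exact_mod_cast h4
      nlinarith
  have hcos_ge : Real.sin (π / (2 * N₂)) ≤ Real.cos θ := by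
    rw [← Real.cos_pi_div_two_sub]
    apply Real.cos_le_cos_of_nonneg_of_le_pi hθpos.le
    · have hfrac : 0 < π / (2*(N₂:ℝ)) := by positivity
      linarith
    · rw [hθ]
      have h2m : (2*(m:ℝ)+1) ≤ (N₂:ℝ) - 1 := by
        have : 2*m+1 ≤ N₂ - 1 := by omega
        have h' : (2*m+1 : ℝ) ≤ ((N₂ - 1 : ℕ) : ℝ) := by exact_mod_cast this
        rw [Nat.cast_sub (by omega)] at h'
        push_cast at h'
        linarith
      have hexp : π/2 - π/(2*(N₂:ℝ)) = π*((N₂:ℝ)-1)/(2*N₂) := by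
        field_simp
      rw [hexp]
      apply div_le_div_of_nonneg_right ?_ (by positivity) |>.trans_eq rfl
      nlinarith
  have hthird : 4 * Real.sin (π / (2 * N₂)) * Real.sin (2 * π / N₁) ≤
      2 * r * Real.sin (2 * π / N₁) := by
    rw [hrdef]
    nlinarith [hcos_ge, hsin2N1]
  exact ⟨hfirst, hsecond, hthird⟩
end

section
/- Minimum distance of the Ungerboeck subset: for powers of 2 N₁, N₂ with 8 ≤ N₁ ≤ N₂, the minimum Euclidean distance of the set S^{eo}_sum = S^e_1 + S^o_2 equals 4·sin(π/(2N₂))·sin(2π/N₁). -/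
open Real

lemma two_I_sin (d : ℂ) :
    Complex.exp (d * Complex.I) - Complex.exp (-(d * Complex.I)) = 2 * Complex.I * Complex.sin d := by
  rw [Complex.sin]; simp only [neg_mul]
  linear_combination (Complex.exp (d * Complex.I) - Complex.exp (-(d * Complex.I))) * Complex.I_sq

lemma exp_sub_exp (x y : ℝ) :
    Complex.exp ((x:ℂ) * Complex.I) - Complex.exp ((y:ℂ) * Complex.I) =
    2 * Complex.I * (Real.sin ((x - y)/2) : ℝ) *
      Complex.exp ((((x + y)/2 : ℝ) : ℂ) * Complex.I) := by
  have hx : (x:ℂ) * Complex.I = (((x+y)/2 : ℝ):ℂ) * Complex.I + (((x-y)/2 : ℝ):ℂ) * Complex.I := by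
    push_cast; ring
  have hy : (y:ℂ) * Complex.I = (((x+y)/2 : ℝ):ℂ) * Complex.I + -((((x-y)/2 : ℝ):ℂ) * Complex.I) := by
    push_cast; ring
  rw [hx, hy, Complex.exp_add, Complex.exp_add, ← mul_sub, two_I_sin, Complex.ofReal_sin]
  ring

lemma abs_sq_combo (s t φ ψ : ℝ) :
    ‖(s:ℂ) * Complex.exp ((φ:ℂ) * Complex.I) +
      (t:ℂ) * Complex.exp ((ψ:ℂ) * Complex.I)‖ ^ 2
    = s^2 + t^2 + 2*s*t*Real.cos (φ - ψ) := by
  rw [Complex.sq_norm, Complex.normSq_apply]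
  simp [Complex.add_re, Complex.add_im, Complex.mul_re, Complex.mul_im,
    Complex.exp_ofReal_mul_I_re, Complex.exp_ofReal_mul_I_im, Real.cos_sub]
  nlinarith [Real.sin_sq_add_cos_sq φ, Real.sin_sq_add_cos_sq ψ]

lemma dist_sq (x1 y1 x2 y2 : ℝ) :
    ‖(Complex.exp ((x1:ℂ) * Complex.I) + Complex.exp ((y1:ℂ) * Complex.I)) -
      (Complex.exp ((x2:ℂ) * Complex.I) + Complex.exp ((y2:ℂ) * Complex.I))‖^2 =
    4*(Real.sin ((x1-x2)/2)^2 + Real.sin ((y1-y2)/2)^2 +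
      2*Real.sin ((x1-x2)/2)*Real.sin ((y1-y2)/2)*Real.cos ((x1+x2)/2 - (y1+y2)/2)) := by
  have hfac : (Complex.exp ((x1:ℂ) * Complex.I) + Complex.exp ((y1:ℂ) * Complex.I)) -
      (Complex.exp ((x2:ℂ) * Complex.I) + Complex.exp ((y2:ℂ) * Complex.I)) =
      2*Complex.I * (((Real.sin ((x1-x2)/2) : ℝ) : ℂ) *
          Complex.exp ((((x1+x2)/2 : ℝ):ℂ) * Complex.I) +
        ((Real.sin ((y1-y2)/2) : ℝ):ℂ) * Complex.exp ((((y1+y2)/2 : ℝ):ℂ) * Complex.I)) := by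
    have e1 := exp_sub_exp x1 x2
    have e2 := exp_sub_exp y1 y2
    calc (Complex.exp ((x1:ℂ) * Complex.I) + Complex.exp ((y1:ℂ) * Complex.I)) -
        (Complex.exp ((x2:ℂ) * Complex.I) + Complex.exp ((y2:ℂ) * Complex.I))
        = (Complex.exp ((x1:ℂ) * Complex.I) - Complex.exp ((x2:ℂ) * Complex.I)) +
          (Complex.exp ((y1:ℂ) * Complex.I) - Complex.exp ((y2:ℂ) * Complex.I)) := by ring
      _ = _ := by rw [e1, e2]; ring
  rw [hfac, norm_mul]
  have h2I : ‖2*Complex.I‖ = 2 := by simp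
  rw [h2I, mul_pow, abs_sq_combo]
  ring

lemma sin_mono01 {x y : ℝ} (hx : 0 ≤ x) (hy : y ≤ π/2) (hxy : x ≤ y) :
    Real.sin x ≤ Real.sin y :=
  Real.strictMonoOn_sin.monotoneOn ⟨by linarith [Real.pi_pos], by linarith⟩
    ⟨by linarith [Real.pi_pos], hy⟩ hxy

lemma sin_lb {a x : ℝ} (ha : 0 ≤ a) (h1 : a ≤ x) (h2 : x ≤ π - a) : Real.sin a ≤ Real.sin x := by
  rcases le_total x (π/2) with h | h
  · exact sin_mono01 ha h h1
  · rw [← Real.sin_pi_sub x]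
    exact sin_mono01 ha (by linarith) (by linarith)

lemma abs_sin_reduce (H : ℕ) (hH : 0 < H) (j : ℤ) :
    |Real.sin (π * j / H)| = Real.sin (π * ((j % (H:ℤ) : ℤ) : ℝ) / H) := by
  have hHR : (0:ℝ) < H := by exact_mod_cast hH
  set r : ℤ := j % H with hr
  have hr0 : 0 ≤ r := Int.emod_nonneg j (by exact_mod_cast hH.ne')
  have hrH : r < H := Int.emod_lt_of_pos j (by exact_mod_cast hH)
  have h2 : r + (H:ℤ) * (j / H) = j := Int.emod_add_mul_ediv j H
  have hq : (j : ℝ) = (r:ℝ) + (H:ℝ) * ((j / H : ℤ) : ℝ) := by exact_mod_cast h2.symm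
  have hangle : π * j / H = π * r / H + (j / H : ℤ) * π := by
    rw [hq]; field_simp
  have habs1 : |((-1:ℝ)) ^ (j / (H:ℤ))| = 1 := by
    rcases Int.even_or_odd (j / (H:ℤ)) with he | ho
    · rw [he.neg_one_zpow]; norm_num
    · rw [ho.neg_one_zpow]; norm_num
  rw [hangle, Real.sin_add_int_mul_pi, abs_mul, habs1, one_mul, abs_of_nonneg]
  apply Real.sin_nonneg_of_nonneg_of_le_pi
  · positivity
  · rw [div_le_iff₀ hHR]
    have : (r:ℝ) ≤ H := by exact_mod_cast hrH.le
    nlinarith [Real.pi_pos]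

/-- minimum nonzero value of |sin (π j / H)| -/
lemma sin_min (H : ℕ) (hH : 0 < H) (j : ℤ) (hj : ¬ ((H:ℤ) ∣ j)) :
    Real.sin (π / H) ≤ |Real.sin (π * j / H)| := by
  have hHR : (0:ℝ) < H := by exact_mod_cast hH
  rw [abs_sin_reduce H hH j]
  set r : ℤ := j % H with hr
  have hr0 : 0 ≤ r := Int.emod_nonneg j (by exact_mod_cast hH.ne')
  have hrH : r < H := Int.emod_lt_of_pos j (by exact_mod_cast hH)
  have hrne : r ≠ 0 := fun h0 => hj (Int.dvd_of_emod_eq_zero h0)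
  have h1r : (1:ℝ) ≤ r := by exact_mod_cast hr0.lt_of_ne (Ne.symm hrne)
  have hrHR : (r:ℝ) ≤ (H:ℝ) - 1 := by exact_mod_cast (by omega : r ≤ (H:ℤ) - 1)
  have hpi := Real.pi_pos
  have hsub : π - π/(H:ℝ) = π*((H:ℝ)-1)/H := by field_simp
  apply sin_lb (by positivity)
  · rw [div_le_div_iff₀ hHR hHR]
    nlinarith [mul_nonneg (mul_nonneg hpi.le (sub_nonneg.mpr h1r)) hHR.le]
  · rw [hsub, div_le_div_iff₀ hHR hHR]
    nlinarith [mul_nonneg (mul_nonneg hpi.le (sub_nonneg.mpr hrHR)) hHR.le]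

/-- spectrum gap -/
lemma sin_gap (H : ℕ) (hH : 0 < H) (k : ℕ) (hk1 : 1 ≤ k) (hk2 : 2*k ≤ H) (j : ℤ) :
    |Real.sin (π * j / H)| ≤ Real.sin (π * ((k:ℝ)-1) / H) ∨
      Real.sin (π * k / H) ≤ |Real.sin (π * j / H)| := by
  have hHR : (0:ℝ) < H := by exact_mod_cast hH
  have hpi := Real.pi_pos
  have hkH : 2*(k:ℝ) ≤ H := by exact_mod_cast hk2
  have h1k : (1:ℝ) ≤ (k:ℝ) := by exact_mod_cast hk1
  rw [abs_sin_reduce H hH j]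
  set r : ℤ := j % H with hr
  have hr0 : 0 ≤ r := Int.emod_nonneg j (by exact_mod_cast hH.ne')
  have hrH : r < H := Int.emod_lt_of_pos j (by exact_mod_cast hH)
  -- reflect
  set r2 : ℤ := min r ((H:ℤ) - r) with hr2
  have hr20 : (0:ℝ) ≤ (r2:ℝ) := by
    have : 0 ≤ r2 := le_min hr0 (by omega)
    exact_mod_cast this
  have hr2half : 2*(r2:ℝ) ≤ H := by
    have : 2*r2 ≤ (H:ℤ) := by
      have h1 : r2 ≤ r := min_le_left _ _
      have h2 : r2 ≤ (H:ℤ) - r := min_le_right _ _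
      omega
    exact_mod_cast this
  have hswitch : Real.sin (π * r / H) = Real.sin (π * r2 / H) := by
    rcases min_choice r ((H:ℤ) - r) with hmin | hmin
    · rw [← hr2] at hmin; rw [hmin]
    · rw [← hr2] at hmin; rw [hmin]
      have hcalc : π * (((H:ℤ) - r : ℤ):ℝ) / H = π - π * r / H := by
        push_cast; field_simp
      rw [hcalc, Real.sin_pi_sub]
  rw [hswitch]
  rcases le_or_gt r2 ((k:ℤ)-1) with hcase | hcase
  · left
    have hcast : (r2:ℝ) ≤ (k:ℝ) - 1 := by
      have : (r2:ℝ) ≤ ((k:ℤ)-1 : ℤ) := by exact_mod_cast hcase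
      push_cast at this; linarith
    apply sin_mono01 (by positivity)
    · rw [div_le_div_iff₀ hHR (by norm_num : (0:ℝ) < 2)]; nlinarith
    · gcongr
  · right
    have hcast : (k:ℝ) ≤ (r2:ℝ) := by
      have : (k:ℤ) ≤ r2 := by omega
      exact_mod_cast this
    apply sin_mono01 (by positivity)
    · rw [div_le_div_iff₀ hHR (by norm_num : (0:ℝ) < 2)]; nlinarith
    · gcongr

/-- pure arithmetic part -/
lemma arith_part (S T q0 c2 M s t c : ℝ)
    (hSpos : 0 < S) (hS1 : S ≤ 1) (hq0pos : 0 < q0) (hq0small : q0 ≤ 1/4)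
    (hhalf : 1 - c2 = 2*q0^2) (hT2 : 2*q0 ≤ T)
    (hgapge : 4*q0^2*S ≤ S - M)
    (hs : s = 0 ∨ S ≤ |s|)
    (ht : t = 0 ∨ (T ≤ |t| ∧ (|t| ≤ M ∨ S ≤ |t|)))
    (hc : |c| ≤ c2) (hne : ¬(s = 0 ∧ t = 0)) :
    (4*q0*S)^2 ≤ 4*(s^2 + t^2 + 2*s*t*c) := by
  have hS2le : S^2 ≤ 1 := by nlinarith
  rcases hs with hs0 | hsS
  · rcases ht with ht0 | ⟨htT, _⟩
    · exact absurd ⟨hs0, ht0⟩ hne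
    · subst hs0
      have ht2 : T^2 ≤ t^2 := by nlinarith [sq_abs t, abs_nonneg t]
      have e1 : 4*q0^2 ≤ T^2 := by nlinarith
      have e2 : q0^2*S^2 ≤ q0^2 := by nlinarith [sq_nonneg q0]
      nlinarith [e1, e2, ht2]
  · rcases ht with ht0 | ⟨htT, hgap2⟩
    · subst ht0
      have hs2 : S^2 ≤ s^2 := by nlinarith [sq_abs s, abs_nonneg s]
      have e : q0^2 ≤ 1/16 := by nlinarith
      have e' := mul_le_mul_of_nonneg_right e (sq_nonneg S)
      nlinarith [e', hs2]
    · have h2 : -(|s| * |t| * c2) ≤ s*t*c := by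
        have h1 : |s * t * c| ≤ |s| * |t| * c2 := by
          rw [abs_mul, abs_mul]
          exact mul_le_mul_of_nonneg_left hc (by positivity)
        have := neg_abs_le (s*t*c); linarith
      have e3 : 4*(|s| * |t|)*q0^2 - 2*(|s| * |t|) = -2*(|s| * |t|)*c2 := by
        rw [show c2 = 1 - 2*q0^2 by linarith]; ring
      have hkey : (|s| - |t|)^2 + 4*(|s| * |t|)*q0^2 ≤ s^2 + t^2 + 2*s*t*c := by
        nlinarith [sq_abs s, sq_abs t, h2, e3]
      rcases hgap2 with hM2 | hS2
      · have hstep : 4*q0^2*S ≤ |s| - |t| := by linarith [hsS]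
        have hpos : (0:ℝ) ≤ 4*q0^2*S := by positivity
        have h1' : 4*q0^2*S*(|s| - |t|) ≤ (|s| - |t|)*(|s| - |t|) :=
          mul_le_mul_of_nonneg_right hstep (by linarith)
        have e4 : S^2 ≤ S*(|s| - |t|) + |s| * |t| := by
          nlinarith [mul_nonneg (sub_nonneg.mpr hsS) (by positivity : (0:ℝ) ≤ S + |t|)]
        have e5 : 16*q0^2*S^2 ≤ 16*q0^2*(S*(|s| - |t|) + |s| * |t|) := by
          have := mul_le_mul_of_nonneg_left e4 (by positivity : (0:ℝ) ≤ 16*q0^2)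
          linarith
        linarith [e5, h1', hkey]
      · have e7 : S^2 ≤ |s| * |t| := by nlinarith [mul_le_mul hsS hS2 hSpos.le (abs_nonneg s)]
        have e8 : 16*q0^2*S^2 ≤ 16*q0^2*(|s| * |t|) := by
          have := mul_le_mul_of_nonneg_left e7 (by positivity : (0:ℝ) ≤ 16*q0^2)
          linarith
        linarith [e8, hkey, sq_nonneg (|s| - |t|)]

set_option maxHeartbeats 1000000 in
lemma trig_facts (n1 n2 kR : ℝ) (h8 : 8 ≤ n1) (hle : n1 ≤ n2) (hk : n2 = n1 * kR) (hk1 : 1 ≤ kR) :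
    0 < Real.sin (2*π/n1) ∧ Real.sin (2*π/n1) ≤ 1 ∧
    0 < Real.sin (π/(2*n2)) ∧ Real.sin (π/(2*n2)) ≤ 1/4 ∧
    1 - Real.cos (π/n2) = 2*Real.sin (π/(2*n2))^2 ∧
    2*Real.sin (π/(2*n2)) ≤ Real.sin (2*π/n2) ∧
    4*Real.sin (π/(2*n2))^2 * Real.sin (2*π/n1) ≤
      Real.sin (2*π/n1) - Real.sin (2*π*(kR-1)/n2) := by
  have hpi := Real.pi_pos
  have hpi4 := Real.pi_le_four
  have hn1 : (0:ℝ) < n1 := by linarith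
  have hn2 : (0:ℝ) < n2 := by linarith
  have hn28 : (8:ℝ) ≤ n2 := by linarith
  have hang1 : 2*π/n1 ≤ π/4 := by
    rw [div_le_div_iff₀ hn1 (by norm_num : (0:ℝ) < 4)]; nlinarith
  have hang3 : π/(2*n2) ≤ π/4 := by
    rw [div_le_div_iff₀ (by linarith : (0:ℝ) < 2*n2) (by norm_num : (0:ℝ) < 4)]; nlinarith
  have hang4 : π/n2 ≤ π/4 := by
    rw [div_le_div_iff₀ hn2 (by norm_num : (0:ℝ) < 4)]; nlinarith
  have hSpos : 0 < Real.sin (2*π/n1) :=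
    Real.sin_pos_of_pos_of_lt_pi (by positivity) (by nlinarith)
  have hS1 : Real.sin (2*π/n1) ≤ 1 := Real.sin_le_one _
  have hq0pos : 0 < Real.sin (π/(2*n2)) :=
    Real.sin_pos_of_pos_of_lt_pi (by positivity) (by nlinarith)
  have hq0small : Real.sin (π/(2*n2)) ≤ 1/4 := by
    have h1 : Real.sin (π/(2*n2)) < π/(2*n2) := Real.sin_lt (by positivity)
    have h2 : π/(2*n2) ≤ 1/4 := by
      rw [div_le_div_iff₀ (by linarith : (0:ℝ) < 2*n2) (by norm_num : (0:ℝ) < 4)]; nlinarith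
    linarith
  have sqrt2 : Real.sqrt 2 ^ 2 = 2 := Real.sq_sqrt (by norm_num)
  have sqrt2pos : 0 < Real.sqrt 2 := Real.sqrt_pos.mpr (by norm_num)
  have hcosb : ∀ x : ℝ, 0 ≤ x → x ≤ π/4 → Real.sqrt 2 / 2 ≤ Real.cos x := by
    intro x hx hx4
    have := Real.cos_le_cos_of_nonneg_of_le_pi hx (by linarith) hx4
    rw [Real.cos_pi_div_four] at this
    linarith
  have hc1b : Real.sqrt 2 / 2 ≤ Real.cos (π/(2*n2)) := hcosb _ (by positivity) hang3
  have hc2b : Real.sqrt 2 / 2 ≤ Real.cos (π/n2) := hcosb _ (by positivity) hang4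
  have hhalf : 1 - Real.cos (π/n2) = 2*Real.sin (π/(2*n2))^2 := by
    have h := Real.sin_sq_eq_half_sub (π/(2*n2))
    have h2 : 2*(π/(2*n2)) = π/n2 := by field_simp
    rw [h2] at h
    linarith
  have hTeq : Real.sin (2*π/n2) =
      4*Real.sin (π/(2*n2))*Real.cos (π/(2*n2))*Real.cos (π/n2) := by
    have h1 : 2*π/n2 = 2*(π/n2) := by ring
    have h2 : π/n2 = 2*(π/(2*n2)) := by field_simp
    rw [h1, Real.sin_two_mul]
    nth_rewrite 1 [h2]
    rw [Real.sin_two_mul]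
    ring
  have hT2 : 2*Real.sin (π/(2*n2)) ≤ Real.sin (2*π/n2) := by
    rw [hTeq]
    have hcc : 1/2 ≤ Real.cos (π/(2*n2)) * Real.cos (π/n2) := by
      have hc1nn : (0:ℝ) ≤ Real.cos (π/(2*n2)) := by nlinarith
      have := mul_le_mul hc1b hc2b (by positivity) hc1nn
      nlinarith
    nlinarith
  have hSeq : 2*π/n1 = 2*π*kR/n2 := by rw [hk]; field_simp
  have hgap : Real.sin (2*π/n1) - Real.sin (2*π*(kR-1)/n2) =
      4*Real.sin (π/(2*n2))*Real.cos (π/(2*n2))*Real.cos (π*(2*kR-1)/n2) := by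
    rw [hSeq, Real.sin_sub_sin]
    have h1 : (2*π*kR/n2 - 2*π*(kR-1)/n2)/2 = π/n2 := by field_simp; ring
    have h2 : (2*π*kR/n2 + 2*π*(kR-1)/n2)/2 = π*(2*kR-1)/n2 := by field_simp; ring
    rw [h1, h2]
    have h3 : π/n2 = 2*(π/(2*n2)) := by field_simp
    rw [h3, Real.sin_two_mul]
    ring
  have hcos3 : Real.sqrt 2/2 ≤ Real.cos (π*(2*kR-1)/n2) := by
    apply hcosb
    · have : (1:ℝ) ≤ 2*kR - 1 := by linarith
      positivity
    · have h5 : 2*π*kR/n2 ≤ π/4 := by rw [← hSeq]; exact hang1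
      have h6 : π*(2*kR-1)/n2 ≤ 2*π*kR/n2 := by
        rw [div_le_div_iff₀ hn2 hn2]
        nlinarith [mul_pos hpi hn2]
      linarith
  have hgapge : 4*Real.sin (π/(2*n2))^2 * Real.sin (2*π/n1) ≤
      Real.sin (2*π/n1) - Real.sin (2*π*(kR-1)/n2) := by
    rw [hgap]
    have hc1nn : (0:ℝ) ≤ Real.cos (π/(2*n2)) := by nlinarith
    have hcc : 1/2 ≤ Real.cos (π/(2*n2)) * Real.cos (π*(2*kR-1)/n2) := by
      have := mul_le_mul hc1b hcos3 (by positivity) hc1nn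
      nlinarith
    have h1 : Real.sin (π/(2*n2)) * Real.sin (2*π/n1) ≤ 1/2 := by nlinarith
    nlinarith [mul_le_mul_of_nonneg_left hcc (by positivity : (0:ℝ) ≤ 4*Real.sin (π/(2*n2))),
      mul_le_mul_of_nonneg_left h1 (by positivity : (0:ℝ) ≤ 4*Real.sin (π/(2*n2)))]
  exact ⟨hSpos, hS1, hq0pos, hq0small, hhalf, hT2, hgapge⟩


lemma cos_bound (N : ℕ) (hN : 8 ≤ N) (w : ℤ) (hw : ¬((N:ℤ) ∣ w)) :
    |Real.cos (π*w/N)| ≤ Real.cos (π/N) := by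
  have hNR : (0:ℝ) < N := by exact_mod_cast (by omega : 0 < N)
  have hN8 : (8:ℝ) ≤ N := by exact_mod_cast hN
  have hpi := Real.pi_pos
  have h := sin_min N (by omega) w hw
  have hsnn : 0 ≤ Real.sin (π/N) := Real.sin_nonneg_of_nonneg_of_le_pi (by positivity)
    (by rw [div_le_iff₀ hNR]; nlinarith)
  have h2 : Real.sin (π/N)^2 ≤ Real.sin (π*w/N)^2 := by
    have h3 := pow_le_pow_left₀ hsnn h 2
    rwa [sq_abs] at h3
  have hcosnn : 0 ≤ Real.cos (π/N) := by
    apply Real.cos_nonneg_of_mem_Icc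
    constructor
    · have : (0:ℝ) ≤ π/N := by positivity
      linarith
    · rw [div_le_div_iff₀ hNR (by norm_num : (0:ℝ) < 2)]; nlinarith
  calc |Real.cos (π*w/N)| = Real.sqrt (Real.cos (π*w/N)^2) := (Real.sqrt_sq_eq_abs _).symm
    _ ≤ Real.sqrt (Real.cos (π/N)^2) := Real.sqrt_le_sqrt (by
        nlinarith [Real.sin_sq_add_cos_sq (π*(w:ℝ)/N), Real.sin_sq_add_cos_sq (π/(N:ℝ))])
    _ = Real.cos (π/N) := Real.sqrt_sq hcosnn

set_option maxHeartbeats 2000000 in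
/-- For powers of 2 `N₁, N₂` with `8 ≤ N₁ ≤ N₂`, the minimum
Euclidean distance of `S^{eo}_sum` equals `4·sin(π/(2N₂))·sin(2π/N₁)`. -/
theorem stmt_15 (N₁ N₂ u₁ u₂ : ℕ) (h1 : N₁ = 2 ^ u₁) (h2 : N₂ = 2 ^ u₂)
    (h8 : 8 ≤ N₁) (hle : N₁ ≤ N₂) :
    IsLeast {d : ℝ | ∃ p ∈ SeoSum N₁ N₂, ∃ q ∈ SeoSum N₁ N₂,
        p ≠ q ∧ d = ‖p - q‖}
      (4 * sin (π / (2 * N₂)) * sin (2 * π / N₁)) := by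
  -- natural number infrastructure
  have hu1 : 3 ≤ u₁ := by
    by_contra hc
    push_neg at hc
    interval_cases u₁ <;> omega
  have hu12 : u₁ ≤ u₂ := by
    by_contra hc
    push_neg at hc
    have : 2^u₂ < 2^u₁ := Nat.pow_lt_pow_right (by norm_num) hc
    omega
  set k : ℕ := 2^(u₂ - u₁) with hk
  have hN2k : N₂ = N₁ * k := by
    rw [h1, h2, hk, ← pow_add]
    congr 1
    omega
  set H₁ : ℕ := 2^(u₁ - 1) with hH1
  set H₂ : ℕ := 2^(u₂ - 1) with hH2
  set Q : ℕ := 2^(u₂ - 2) with hQ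
  have hN1H : N₁ = 2*H₁ := by
    rw [h1, hH1, ← pow_succ']
    congr 1
    omega
  have hN2H : N₂ = 2*H₂ := by
    rw [h2, hH2, ← pow_succ']
    congr 1
    omega
  have hH2Q : H₂ = 2*Q := by
    rw [hH2, hQ, ← pow_succ']
    congr 1
    omega
  have hk1 : 1 ≤ k := Nat.one_le_two_pow
  have hkH2 : 2*k ≤ H₂ := by
    rw [hk, hH2, ← pow_succ']
    exact Nat.pow_le_pow_right (by norm_num) (by omega)
  have hQ1 : 1 ≤ Q := Nat.one_le_two_pow
  have hN28 : 8 ≤ N₂ := le_trans h8 hle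
  -- real versions
  have hpi := Real.pi_pos
  have hN1R : (8:ℝ) ≤ (N₁:ℝ) := by exact_mod_cast h8
  have hN2R : (N₁:ℝ) ≤ (N₂:ℝ) := by exact_mod_cast hle
  have hN1pos : (0:ℝ) < N₁ := by linarith
  have hN2pos : (0:ℝ) < N₂ := by linarith
  have hH1pos : (0:ℝ) < (H₁:ℝ) := by
    have : 0 < H₁ := pow_pos (by norm_num) _
    exact_mod_cast this
  have hH2pos : (0:ℝ) < (H₂:ℝ) := by
    have : 0 < H₂ := pow_pos (by norm_num) _
    exact_mod_cast this
  have hN1HR : (N₁:ℝ) = 2*(H₁:ℝ) := by exact_mod_cast hN1H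
  have hN2HR : (N₂:ℝ) = 2*(H₂:ℝ) := by exact_mod_cast hN2H
  have hN2kR : (N₂:ℝ) = (N₁:ℝ)*(k:ℝ) := by exact_mod_cast hN2k
  have hk1R : (1:ℝ) ≤ (k:ℝ) := by exact_mod_cast hk1
  obtain ⟨hSpos, hS1, hq0pos, hq0small, hhalf, hT2, hgapge⟩ :=
    trig_facts (N₁:ℝ) (N₂:ℝ) (k:ℝ) hN1R hN2R hN2kR hk1R
  constructor
  · -- membership: witnesses
    have hQ2 : 1 ≤ H₂ := by omega
    have hb1cast : ((H₂ + 2*k - 1 : ℕ):ℝ) = (H₂:ℝ) + 2*(k:ℝ) - 1 := by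
      rw [Nat.cast_sub (by omega)]; push_cast; ring
    have hb2cast : ((H₂ - 1 : ℕ):ℝ) = (H₂:ℝ) - 1 := by
      rw [Nat.cast_sub (by omega)]; push_cast; ring
    have me1 : (2 * (Real.pi:ℂ) * ((2:ℕ):ℂ) / (N₁:ℂ)) =
        (((2*π*((2:ℕ):ℝ)/N₁ : ℝ)) : ℂ) := by push_cast; ring
    have me2 : (2 * (Real.pi:ℂ) * ((0:ℕ):ℂ) / (N₁:ℂ)) =
        (((2*π*((0:ℕ):ℝ)/N₁ : ℝ)) : ℂ) := by push_cast; ring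
    have me3 : ((Real.pi:ℂ) * (2*((H₂ + 2*k - 1 : ℕ):ℂ)+1) / (N₂:ℂ)) =
        (((π*(2*((H₂ + 2*k - 1:ℕ):ℝ)+1)/N₂ : ℝ)) : ℂ) := by push_cast; ring
    have me4 : ((Real.pi:ℂ) * (2*((H₂ - 1 : ℕ):ℂ)+1) / (N₂:ℂ)) =
        (((π*(2*((H₂ - 1:ℕ):ℝ)+1)/N₂ : ℝ)) : ℂ) := by push_cast; ring
    have ma1 : ((2*π*((2:ℕ):ℝ)/N₁) - (2*π*((0:ℕ):ℝ)/N₁))/2 = 2*π/(N₁:ℝ) := by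
      push_cast; field_simp; ring
    have hkRne : (k:ℝ) ≠ 0 := by positivity
    have ma2 : ((π*(2*((H₂ + 2*k - 1:ℕ):ℝ)+1)/N₂) - (π*(2*((H₂ - 1:ℕ):ℝ)+1)/N₂))/2 =
        2*π/(N₁:ℝ) := by
      rw [hb1cast, hb2cast, hN2kR]
      field_simp
      ring
    have ma3 : ((2*π*((2:ℕ):ℝ)/N₁) + (2*π*((0:ℕ):ℝ)/N₁))/2 -
        ((π*(2*((H₂ + 2*k - 1:ℕ):ℝ)+1)/N₂) + (π*(2*((H₂ - 1:ℕ):ℝ)+1)/N₂))/2 =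
        π/(N₂:ℝ) - π := by
      rw [hb1cast, hb2cast]
      push_cast
      have hH12 : (H₂:ℝ) = (H₁:ℝ)*(k:ℝ) := by
        have h' : 2*(H₂:ℝ) = 2*((H₁:ℝ)*(k:ℝ)) := by
          rw [← hN2HR, hN2kR, hN1HR]; ring
        linarith
      rw [hN2HR, hN1HR, hH12]
      have hH1ne : (H₁:ℝ) ≠ 0 := ne_of_gt hH1pos
      field_simp
      ring
    have hcosval : Real.cos (π/(N₂:ℝ) - π) = -Real.cos (π/(N₂:ℝ)) := by
      rw [show π/(N₂:ℝ) - π = -(π - π/(N₂:ℝ)) by ring, Real.cos_neg, Real.cos_pi_sub]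
    have hPQ : ‖(Complex.exp (2 * Real.pi * ((2:ℕ):ℂ) / N₁ * Complex.I) +
        Complex.exp (Real.pi * (2 * ((H₂ + 2*k - 1 : ℕ):ℂ) + 1) / N₂ * Complex.I)) -
        (Complex.exp (2 * Real.pi * ((0:ℕ):ℂ) / N₁ * Complex.I) +
        Complex.exp (Real.pi * (2 * ((H₂ - 1 : ℕ):ℂ) + 1) / N₂ * Complex.I))‖^2 =
        (4 * Real.sin (π / (2 * (N₂:ℝ))) * Real.sin (2 * π / (N₁:ℝ)))^2 := by
      rw [me1, me2, me3, me4, dist_sq, ma1, ma2, ma3, hcosval,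
        show Real.cos (π/(N₂:ℝ)) = 1 - 2*Real.sin (π/(2*(N₂:ℝ)))^2 from by linarith]
      ring
    have habs : ‖(Complex.exp (2 * Real.pi * ((2:ℕ):ℂ) / N₁ * Complex.I) +
        Complex.exp (Real.pi * (2 * ((H₂ + 2*k - 1 : ℕ):ℂ) + 1) / N₂ * Complex.I)) -
        (Complex.exp (2 * Real.pi * ((0:ℕ):ℂ) / N₁ * Complex.I) +
        Complex.exp (Real.pi * (2 * ((H₂ - 1 : ℕ):ℂ) + 1) / N₂ * Complex.I))‖ =
        4 * Real.sin (π / (2 * (N₂:ℝ))) * Real.sin (2 * π / (N₁:ℝ)) := by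
      have h0 := norm_nonneg
        ((Complex.exp (2 * Real.pi * ((2:ℕ):ℂ) / N₁ * Complex.I) +
        Complex.exp (Real.pi * (2 * ((H₂ + 2*k - 1 : ℕ):ℂ) + 1) / N₂ * Complex.I)) -
        (Complex.exp (2 * Real.pi * ((0:ℕ):ℂ) / N₁ * Complex.I) +
        Complex.exp (Real.pi * (2 * ((H₂ - 1 : ℕ):ℂ) + 1) / N₂ * Complex.I)))
      have h1 : (0:ℝ) ≤ 4 * Real.sin (π / (2 * (N₂:ℝ))) * Real.sin (2 * π / (N₁:ℝ)) := by
        positivity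
      exact (sq_eq_sq₀ h0 h1).mp hPQ
    refine ⟨Complex.exp (2 * Real.pi * ((2:ℕ):ℂ) / N₁ * Complex.I) +
        Complex.exp (Real.pi * (2 * ((H₂ + 2*k - 1 : ℕ):ℂ) + 1) / N₂ * Complex.I),
      ⟨2, H₂ + 2*k - 1, by omega, ⟨1, rfl⟩, by omega, ⟨Q + k - 1, by omega⟩, rfl⟩,
      Complex.exp (2 * Real.pi * ((0:ℕ):ℂ) / N₁ * Complex.I) +
        Complex.exp (Real.pi * (2 * ((H₂ - 1 : ℕ):ℂ) + 1) / N₂ * Complex.I),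
      ⟨0, H₂ - 1, by omega, ⟨0, rfl⟩, by omega, ⟨Q - 1, by omega⟩, rfl⟩, ?_, ?_⟩
    · intro h
      rw [h, sub_self, norm_zero] at habs
      have hvpos : 0 < 4*Real.sin (π/(2*(N₂:ℝ)))*Real.sin (2*π/(N₁:ℝ)) := by positivity
      linarith [habs.symm.le, hvpos]
    · exact habs.symm
  · -- lower bound
    rintro d ⟨p, ⟨a1, b1, ha1N, hea1, hb1N, hob1, hpe⟩,
      q, ⟨a2, b2, ha2N, hea2, hb2N, hob2, hqe⟩, hpq, hd⟩
    obtain ⟨a1', rfl⟩ := hea1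
    obtain ⟨a2', rfl⟩ := hea2
    obtain ⟨b1', rfl⟩ := hob1
    obtain ⟨b2', rfl⟩ := hob2
    -- convert complex scalars to real casts
    have e1 : (2 * (Real.pi:ℂ) * ((a1'+a1' : ℕ):ℂ) / (N₁:ℂ)) =
        (((2*π*((a1'+a1':ℕ):ℝ)/N₁ : ℝ)) : ℂ) := by push_cast; ring
    have e2 : (2 * (Real.pi:ℂ) * ((a2'+a2' : ℕ):ℂ) / (N₁:ℂ)) =
        (((2*π*((a2'+a2':ℕ):ℝ)/N₁ : ℝ)) : ℂ) := by push_cast; ring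
    have e3 : ((Real.pi:ℂ) * (2*((2*b1'+1 : ℕ):ℂ)+1) / (N₂:ℂ)) =
        (((π*(2*((2*b1'+1:ℕ):ℝ)+1)/N₂ : ℝ)) : ℂ) := by push_cast; ring
    have e4 : ((Real.pi:ℂ) * (2*((2*b2'+1 : ℕ):ℂ)+1) / (N₂:ℂ)) =
        (((π*(2*((2*b2'+1:ℕ):ℝ)+1)/N₂ : ℝ)) : ℂ) := by push_cast; ring
    rw [e1, e3] at hpe
    rw [e2, e4] at hqe
    -- angle identities
    have hu : ((2*π*((a1'+a1':ℕ):ℝ)/N₁) - (2*π*((a2'+a2':ℕ):ℝ)/N₁))/2 =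
        π * (((a1':ℤ) - (a2':ℤ) : ℤ):ℝ) / (H₁:ℝ) := by
      rw [hN1HR]; push_cast; field_simp; ring
    have hv : ((π*(2*((2*b1'+1:ℕ):ℝ)+1)/N₂) - (π*(2*((2*b2'+1:ℕ):ℝ)+1)/N₂))/2 =
        π * (((b1':ℤ) - (b2':ℤ) : ℤ):ℝ) / (H₂:ℝ) := by
      rw [hN2HR]; push_cast; field_simp; ring
    have hkRne : (k:ℝ) ≠ 0 := by positivity
    have hw : ((2*π*((a1'+a1':ℕ):ℝ)/N₁) + (2*π*((a2'+a2':ℕ):ℝ)/N₁))/2 -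
        ((π*(2*((2*b1'+1:ℕ):ℝ)+1)/N₂) + (π*(2*((2*b2'+1:ℕ):ℝ)+1)/N₂))/2 =
        π * ((2*(((a1':ℤ)+(a2':ℤ))*(k:ℤ) - ((b1':ℤ)+(b2':ℤ))) - 3 : ℤ):ℝ) / (N₂:ℝ) := by
      rw [hN2kR]; push_cast; field_simp; ring
    -- squared distance
    have hd2 : d^2 = 4*(Real.sin (π * (((a1':ℤ) - (a2':ℤ) : ℤ):ℝ) / (H₁:ℝ))^2 +
        Real.sin (π * (((b1':ℤ) - (b2':ℤ) : ℤ):ℝ) / (H₂:ℝ))^2 +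
        2*Real.sin (π * (((a1':ℤ) - (a2':ℤ) : ℤ):ℝ) / (H₁:ℝ)) *
          Real.sin (π * (((b1':ℤ) - (b2':ℤ) : ℤ):ℝ) / (H₂:ℝ)) *
          Real.cos (π * ((2*(((a1':ℤ)+(a2':ℤ))*(k:ℤ) - ((b1':ℤ)+(b2':ℤ))) - 3 : ℤ):ℝ) / (N₂:ℝ))) := by
      rw [hd, hpe, hqe, dist_sq, hu, hv, hw]
    have hH1posN : 0 < H₁ := pow_pos (by norm_num) _
    have hH2posN : 0 < H₂ := pow_pos (by norm_num) _
    -- hypothesis for s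
    have hs : Real.sin (π * (((a1':ℤ) - (a2':ℤ) : ℤ):ℝ) / (H₁:ℝ)) = 0 ∨
        Real.sin (2*π/(N₁:ℝ)) ≤ |Real.sin (π * (((a1':ℤ) - (a2':ℤ) : ℤ):ℝ) / (H₁:ℝ))| := by
      by_cases hdvd : ((H₁:ℤ) ∣ ((a1':ℤ) - (a2':ℤ)))
      · left
        obtain ⟨m', hm'⟩ := hdvd
        rw [hm']
        have : π * (((H₁:ℤ)*m' : ℤ):ℝ)/(H₁:ℝ) = (m':ℝ)*π := by push_cast; field_simp
        rw [this]
        exact_mod_cast Real.sin_int_mul_pi m'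
      · right
        have hmin := sin_min H₁ hH1posN _ hdvd
        have hangle : π/(H₁:ℝ) = 2*π/(N₁:ℝ) := by rw [hN1HR]; field_simp
        rwa [hangle] at hmin
    -- hypothesis for t
    have hangle2 : π/(H₂:ℝ) = 2*π/(N₂:ℝ) := by rw [hN2HR]; field_simp
    have ht : Real.sin (π * (((b1':ℤ) - (b2':ℤ) : ℤ):ℝ) / (H₂:ℝ)) = 0 ∨
        (Real.sin (2*π/(N₂:ℝ)) ≤ |Real.sin (π * (((b1':ℤ) - (b2':ℤ) : ℤ):ℝ) / (H₂:ℝ))| ∧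
          (|Real.sin (π * (((b1':ℤ) - (b2':ℤ) : ℤ):ℝ) / (H₂:ℝ))| ≤
              Real.sin (2*π*((k:ℝ)-1)/(N₂:ℝ)) ∨
            Real.sin (2*π/(N₁:ℝ)) ≤ |Real.sin (π * (((b1':ℤ) - (b2':ℤ) : ℤ):ℝ) / (H₂:ℝ))|)) := by
      by_cases hdvd : ((H₂:ℤ) ∣ ((b1':ℤ) - (b2':ℤ)))
      · left
        obtain ⟨m', hm'⟩ := hdvd
        rw [hm']
        have : π * (((H₂:ℤ)*m' : ℤ):ℝ)/(H₂:ℝ) = (m':ℝ)*π := by push_cast; field_simp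
        rw [this]
        exact_mod_cast Real.sin_int_mul_pi m'
      · right
        constructor
        · have hmin := sin_min H₂ hH2posN _ hdvd
          rwa [hangle2] at hmin
        · have hgapd := sin_gap H₂ hH2posN k hk1 hkH2 ((b1':ℤ) - (b2':ℤ))
          have hang5 : π * ((k:ℝ)-1) / (H₂:ℝ) = 2*π*((k:ℝ)-1)/(N₂:ℝ) := by
            rw [hN2HR]; field_simp
          have hang6 : π * (k:ℝ) / (H₂:ℝ) = 2*π/(N₁:ℝ) := by
            have h2H : 2*(H₂:ℝ) = (N₁:ℝ)*(k:ℝ) := by rw [← hN2HR, hN2kR]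
            rw [div_eq_div_iff (ne_of_gt hH2pos) (ne_of_gt hN1pos)]
            linear_combination (-π) * h2H
          rcases hgapd with hg | hg
          · left; rwa [hang5] at hg
          · right; rwa [hang6] at hg
    -- hypothesis for c
    have hwodd : ¬ ((N₂:ℤ) ∣ (2*(((a1':ℤ)+(a2':ℤ))*(k:ℤ) - ((b1':ℤ)+(b2':ℤ))) - 3 : ℤ)) := by
      intro hdvd
      obtain ⟨c', hc'⟩ := hdvd
      have hN2HZ : (N₂:ℤ) = 2*(H₂:ℤ) := by exact_mod_cast hN2H
      have heq : (2:ℤ)*(((a1':ℤ)+(a2':ℤ))*(k:ℤ) - ((b1':ℤ)+(b2':ℤ))) - 3 = 2*((H₂:ℤ)*c') := by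
        rw [hc', hN2HZ]; ring
      generalize hA : ((a1':ℤ)+(a2':ℤ))*(k:ℤ) = A at heq
      generalize hB : (H₂:ℤ)*c' = B at heq
      omega
    have hc : |Real.cos (π * ((2*(((a1':ℤ)+(a2':ℤ))*(k:ℤ) - ((b1':ℤ)+(b2':ℤ))) - 3 : ℤ):ℝ) / (N₂:ℝ))| ≤
        Real.cos (π/(N₂:ℝ)) := cos_bound N₂ hN28 _ hwodd
    -- nondegeneracy
    have hne : ¬ (Real.sin (π * (((a1':ℤ) - (a2':ℤ) : ℤ):ℝ) / (H₁:ℝ)) = 0 ∧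
        Real.sin (π * (((b1':ℤ) - (b2':ℤ) : ℤ):ℝ) / (H₂:ℝ)) = 0) := by
      rintro ⟨hs0, ht0⟩
      apply hpq
      have hA := exp_sub_exp (2*π*((a1'+a1':ℕ):ℝ)/N₁) (2*π*((a2'+a2':ℕ):ℝ)/N₁)
      have hB := exp_sub_exp (π*(2*((2*b1'+1:ℕ):ℝ)+1)/N₂) (π*(2*((2*b2'+1:ℕ):ℝ)+1)/N₂)
      rw [hu, hs0] at hA
      rw [hv, ht0] at hB
      simp only [Complex.ofReal_zero, mul_zero, zero_mul] at hA hB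
      have hzero : p - q = 0 := by
        rw [hpe, hqe]
        have expand : ∀ A B C D : ℂ, (A + B) - (C + D) = (A - C) + (B - D) := by intros; ring
        rw [expand, hA, hB]
        ring
      exact sub_eq_zero.mp hzero
    -- apply the arithmetic lemma
    have final := arith_part (Real.sin (2*π/(N₁:ℝ))) (Real.sin (2*π/(N₂:ℝ)))
      (Real.sin (π/(2*(N₂:ℝ)))) (Real.cos (π/(N₂:ℝ))) (Real.sin (2*π*((k:ℝ)-1)/(N₂:ℝ)))
      _ _ _ hSpos hS1 hq0pos hq0small hhalf hT2 hgapge hs ht hc hne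
    have hd0 : 0 ≤ d := by rw [hd]; exact norm_nonneg _
    nlinarith [final, hd2, hd0, mul_pos hq0pos hSpos]
end
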